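/- For every n ≥ 2, every 1 ≤ i ≤ n and every natural number j, the number of minimal factorizations F ∈ 𝔐_n with T_i(F) = j equals the number of minimal factorizations F ∈ 𝔐_n with T_1(F) = j. -/

import Mathlib

/-- `F` is a minimal factorization of size `n`, i.e. a factorization of the cycle
`(1,2,…,n)` (represented as `finRotate n` on `Fin n`, where the element `i ∈ {1,…,n}`
corresponds to the index `i-1 : Fin n`) into `n-1` transpositions: each `F k` is a
transposition and the left-to-right product `τ₁ τ₂ ⋯ τ_{n-1}` (apply `τ₁` first)
equals the cycle. -/
def IsMinFact (n : ℕ) (F : Fin (n - 1) → Equiv.Perm (Fin n)) : Prop :=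
  (∀ k, (F k).IsSwap) ∧ (List.ofFn F).reverse.prod = finRotate n

/-- `T(F, x)`: the number of transpositions in `F` moving the element represented by `x`. -/
def Tcount {n : ℕ} (F : Fin (n - 1) → Equiv.Perm (Fin n)) (x : Fin n) : ℕ :=
  (Finset.univ.filter fun k : Fin (n - 1) => F k x ≠ x).card

/-- `M(F, x)`: the number of indices `1 ≤ k ≤ n-1` with `τ₁⋯τ_{k-1}(x) ≠ τ₁⋯τ_k(x)`,
i.e. the number of transpositions affecting the trajectory of `x` (left-to-right
partial products, so `τ₁⋯τ_k` is the product of the first `k` entries, applied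
`τ₁` first). -/
def Mcount {n : ℕ} (F : Fin (n - 1) → Equiv.Perm (Fin n)) (x : Fin n) : ℕ :=
  (Finset.univ.filter fun k : Fin (n - 1) =>
    ((List.ofFn F).take k.val).reverse.prod x ≠
      ((List.ofFn F).take (k.val + 1)).reverse.prod x).card

lemma conj_list_prod {n : ℕ} (σ : Equiv.Perm (Fin n)) (l : List (Equiv.Perm (Fin n))) :
    (l.map fun τ => σ⁻¹ * τ * σ).prod = σ⁻¹ * l.prod * σ := by
  induction l with
  | nil => simp
  | cons a l ih => simp [ih]; group

lemma conj_isMinFact {n : ℕ} (σ : Equiv.Perm (Fin n)) (hσ : Commute σ (finRotate n))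
    {F : Fin (n-1) → Equiv.Perm (Fin n)} (h : IsMinFact n F) :
    IsMinFact n (fun k => σ⁻¹ * F k * σ) := by
  obtain ⟨hs, hp⟩ := h
  constructor
  · intro k
    obtain ⟨a, b, hab, h⟩ := hs k
    refine ⟨σ⁻¹ a, σ⁻¹ b, fun h' => hab (σ⁻¹.injective h'), ?_⟩
    show σ⁻¹ * F k * σ = _
    rw [h, Equiv.swap_apply_apply]; group
  · have heq : List.ofFn (fun k => σ⁻¹ * F k * σ)
        = (List.ofFn F).map (fun τ => σ⁻¹ * τ * σ) := by
      rw [List.map_ofFn]; rfl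
    rw [heq, ← List.map_reverse, conj_list_prod, hp]
    rw [hσ.inv_left.eq, mul_assoc]; simp

lemma conj_tcount {n : ℕ} (σ : Equiv.Perm (Fin n)) (F : Fin (n-1) → Equiv.Perm (Fin n))
    (y : Fin n) :
    Tcount (fun k => σ⁻¹ * F k * σ) y = Tcount F (σ y) := by
  unfold Tcount
  congr 1
  apply Finset.filter_congr
  intro k _
  simp only [Equiv.Perm.mul_apply]
  constructor
  · intro h h'
    exact h (by rw [h']; simp)
  · intro h h'
    exact h (by simpa using congrArg σ h')

lemma conj_card (n j : ℕ) (x : Fin n) :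
    Nat.card {F : Fin (n - 1) → Equiv.Perm (Fin n) //
      IsMinFact n F ∧ Tcount F (finRotate n x) = j} =
    Nat.card {F : Fin (n - 1) → Equiv.Perm (Fin n) //
      IsMinFact n F ∧ Tcount F x = j} := by
  set c : Equiv.Perm (Fin n) := finRotate n with hc
  apply Nat.card_congr
  refine ⟨fun F => ⟨fun k => c⁻¹ * F.1 k * c, conj_isMinFact c (Commute.refl _) F.2.1,
      by rw [conj_tcount]; exact F.2.2⟩,
    fun G => ⟨fun k => (c⁻¹)⁻¹ * G.1 k * c⁻¹,
      conj_isMinFact c⁻¹ ((Commute.refl c).inv_left) G.2.1, ?_⟩, ?_, ?_⟩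
  · rw [conj_tcount]
    simpa using G.2.2
  · intro F; ext k; simp
  · intro G; ext k; simp

lemma finRotate_pow_zero (n m : ℕ) (hn : 2 ≤ n) (hm : m < n) :
    ((finRotate n) ^ m) ⟨0, Nat.zero_lt_of_lt hm⟩ = ⟨m, hm⟩ := by
  obtain ⟨n', rfl⟩ : ∃ n', n = n' + 1 := ⟨n - 1, by omega⟩
  induction m with
  | zero => rfl
  | succ m ih =>
    rw [pow_succ', Equiv.Perm.mul_apply, ih (by omega)]
    rw [finRotate_succ_apply]
    apply Fin.ext
    simp [Fin.val_add, Nat.mod_eq_of_lt (show 1 < n' + 1 by omega),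
      Nat.mod_eq_of_lt (show m + 1 < n' + 1 by omega)]


/-- for `1 ≤ i ≤ n`, the number of minimal factorizations with
`T_i = j` equals the number of minimal factorizations with `T_1 = j` (element `i`
of `{1,…,n}` is the index `i-1 : Fin n`). -/
theorem card_Ti_eq_card_T1 (n i j : ℕ) (hn : 2 ≤ n) (hi1 : 1 ≤ i) (hi2 : i ≤ n) :
    Nat.card {F : Fin (n - 1) → Equiv.Perm (Fin n) //
      IsMinFact n F ∧ Tcount F ⟨i - 1, by omega⟩ = j} =
    Nat.card {F : Fin (n - 1) → Equiv.Perm (Fin n) //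
      IsMinFact n F ∧ Tcount F ⟨0, by omega⟩ = j} := by
  have hx : (⟨i - 1, by omega⟩ : Fin n) = ((finRotate n) ^ (i - 1)) ⟨0, by omega⟩ :=
    (finRotate_pow_zero n (i - 1) hn (by omega)).symm
  rw [hx]
  generalize (i - 1) = m
  induction m with
  | zero => simp
  | succ m ih =>
    rw [pow_succ', Equiv.Perm.mul_apply, conj_card]
    exact ih
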